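/- Let N ≥ 1. The average Shannon entropy of a probability vector drawn from the uniform probability measure on the probability simplex Δ_{N−1} equals H_N − 1, i.e., ∫ H(λ) dμ_N(λ) = H_N − 1, where H_N = Σ_{j=1}^N 1/j. -/

import Mathlib

open MeasureTheory Real

/-- Shannon entropy of a vector, with the convention `0 * log 0 = 0`. -/
noncomputable def shannonEntropy {N : ℕ} (p : Fin N → ℝ) : ℝ :=
  ∑ i, Real.negMulLog (p i)

/-- Subentropy of a vector (well defined when the entries are pairwise distinct). -/
noncomputable def subentropy {N : ℕ} (p : Fin N → ℝ) : ℝ :=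
  -∑ i, p i ^ N * Real.log (p i) / ∏ j ∈ Finset.univ.erase i, (p i - p j)

/-- A matrix is bi-stochastic if it has nonnegative entries and all row and column sums are 1. -/
def IsBistochastic {N : ℕ} (B : Matrix (Fin N) (Fin N) ℝ) : Prop :=
  (∀ i j, 0 ≤ B i j) ∧ (∀ i, ∑ j, B i j = 1) ∧ (∀ j, ∑ i, B i j = 1)

/-- Parametrization of the probability simplex `Δ_{N-1}` by the solid simplex in `ℝ^{N-1}`:
`x ↦ (x_1, …, x_{N-1}, 1 - ∑_{j<N} x_j)`. -/
noncomputable def simplexMap (N : ℕ) (x : Fin (N - 1) → ℝ) : Fin N → ℝ :=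
  fun i => if h : (i : ℕ) < N - 1 then x ⟨i, h⟩ else 1 - ∑ j, x j

/-- The solid simplex `T = {x ∈ ℝ^{N-1} : x_j ≥ 0, ∑_j x_j ≤ 1}`. -/
def solidSimplex (N : ℕ) : Set (Fin (N - 1) → ℝ) :=
  {x | (∀ j, 0 ≤ x j) ∧ ∑ j, x j ≤ 1}

/-- Integral of a function on the probability simplex with respect to the uniform
probability measure `μ_N`, realized as `(N-1)!` times the Lebesgue integral over the
solid simplex of the parametrized integrand. -/
noncomputable def simplexIntegral (N : ℕ) (f : (Fin N → ℝ) → ℝ) : ℝ :=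
  ((N - 1).factorial : ℝ) * ∫ x in solidSimplex N, f (simplexMap N x)

/-- The `N`-th harmonic number `H_N = ∑_{j=1}^N 1/j`. -/
noncomputable def harmonicNum (N : ℕ) : ℝ := ∑ j ∈ Finset.range N, (1 : ℝ) / (j + 1)

section AuxEntropy
open Finset

lemma harmonicNum_succ (n : ℕ) : harmonicNum (n+1) = harmonicNum n + 1/(n+1) := by
  simp [harmonicNum, Finset.sum_range_succ]

lemma pascal_sum (n : ℕ) (f : ℕ → ℝ) :
    ∑ k ∈ range (n+2), ((n+1).choose k : ℝ) * (-1)^k * f k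
    = ∑ k ∈ range (n+1), (n.choose k : ℝ) * (-1)^k * f k
      - ∑ k ∈ range (n+1), (n.choose k : ℝ) * (-1)^k * f (k+1) := by
  rw [Finset.sum_range_succ' (fun k => ((n+1).choose k : ℝ) * (-1)^k * f k) (n+1)]
  have h1 : ∀ k, ((n+1).choose (k+1) : ℝ) = (n.choose k : ℝ) + (n.choose (k+1) : ℝ) := by
    intro k; rw [Nat.choose_succ_succ]; push_cast; ring
  have : ∑ k ∈ range (n+1), ((n+1).choose (k+1) : ℝ) * (-1)^(k+1) * f (k+1)
      = (∑ k ∈ range (n+1), -((n.choose k : ℝ) * (-1)^k * f (k+1)))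
        + ∑ k ∈ range (n+1), (n.choose (k+1) : ℝ) * (-1)^(k+1) * f (k+1) := by
    rw [← Finset.sum_add_distrib]
    refine Finset.sum_congr rfl fun k _ => ?_
    rw [h1]; ring
  rw [this]
  have h2 : ∑ k ∈ range (n+1), (n.choose (k+1) : ℝ) * (-1)^(k+1) * f (k+1)
      = ∑ k ∈ range (n+2), (n.choose k : ℝ) * (-1)^k * f k
        - (n.choose 0 : ℝ) * (-1)^0 * f 0 := by
    rw [Finset.sum_range_succ' (fun k => (n.choose k : ℝ) * (-1)^k * f k) (n+1)]
    ring
  rw [Finset.sum_neg_distrib, h2,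
    Finset.sum_range_succ (fun k => (n.choose k : ℝ) * (-1)^k * f k) (n+1),
    Finset.sum_range_succ (fun k => (n.choose k : ℝ) * (-1)^k * f (k+1)) n]
  simp only [Nat.choose_succ_self, Nat.choose_zero_right, Nat.choose_self, Nat.cast_zero,
    Nat.cast_one, zero_mul, mul_zero, one_mul, pow_zero]
  ring

lemma fact_ne (m : ℕ) : ((m.factorial : ℝ)) ≠ 0 := by
  exact_mod_cast m.factorial_pos.ne'

lemma sumA (n : ℕ) : ∀ a : ℕ, ∑ k ∈ range (n+1), (n.choose k : ℝ) * (-1)^k * (1/(k+a+1))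
    = (n.factorial : ℝ) * a.factorial / (n+a+1).factorial := by
  induction n with
  | zero =>
    intro a
    have h : (((0+a+1).factorial : ℕ) : ℝ) = (a+1) * a.factorial := by
      rw [show (0:ℕ)+a+1 = a+1 by ring, Nat.factorial_succ]; push_cast; ring
    rw [Finset.sum_range_succ, Finset.sum_range_zero, h]
    simp only [Nat.choose_self, Nat.cast_one, pow_zero, Nat.cast_zero]
    have ha : (a:ℝ)+1 ≠ 0 := by positivity
    have := fact_ne a
    field_simp
    simp
  | succ n ih =>
    intro a
    rw [pascal_sum n (fun k => 1/(k+a+1))]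
    have h1 := ih a
    have h2 := ih (a+1)
    have e2 : ∑ k ∈ range (n+1), (n.choose k : ℝ) * (-1)^k * (1/(((k+1:ℕ):ℝ)+a+1))
        = ∑ k ∈ range (n+1), (n.choose k : ℝ) * (-1)^k * (1/((k:ℝ)+((a+1:ℕ):ℝ)+1)) := by
      refine Finset.sum_congr rfl fun k _ => ?_
      push_cast; ring_nf
    rw [e2, h1, h2]
    have hn : (((n+(a+1)+1).factorial : ℕ) : ℝ) = (n+a+2) * (n+a+1).factorial := by
      rw [show n+(a+1)+1 = (n+a+1)+1 by ring, Nat.factorial_succ]; push_cast; ring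
    have hn2 : (((n+1+a+1).factorial : ℕ) : ℝ) = (n+a+2) * (n+a+1).factorial := by
      rw [show n+1+a+1 = (n+a+1)+1 by ring, Nat.factorial_succ]; push_cast; ring
    have ha : (((a+1).factorial : ℕ) : ℝ) = (a+1) * a.factorial := by
      rw [Nat.factorial_succ]; push_cast; ring
    have hnn : (((n+1).factorial : ℕ) : ℝ) = (n+1) * n.factorial := by
      rw [Nat.factorial_succ]; push_cast; ring
    rw [hn, hn2, ha, hnn]
    have f1 := fact_ne (n+a+1)
    have f2 : ((n:ℝ)+(a:ℝ)+2) ≠ 0 := by positivity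
    field_simp
    ring

lemma sumB (n : ℕ) : ∀ a : ℕ, ∑ k ∈ range (n+1), (n.choose k : ℝ) * (-1)^k * (1/((k:ℝ)+a+1)^2)
    = (n.factorial : ℝ) * a.factorial / (n+a+1).factorial
      * (harmonicNum (n+a+1) - harmonicNum a) := by
  induction n with
  | zero =>
    intro a
    have h : (((0+a+1).factorial : ℕ) : ℝ) = (a+1) * a.factorial := by
      rw [show (0:ℕ)+a+1 = a+1 by ring, Nat.factorial_succ]; push_cast; ring
    have hH : harmonicNum (0+a+1) = harmonicNum a + 1/(a+1) := by
      rw [show 0+a+1 = a+1 by ring, harmonicNum_succ]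
    rw [Finset.sum_range_succ, Finset.sum_range_zero, h, hH]
    simp only [Nat.choose_self, Nat.cast_one, pow_zero, Nat.cast_zero]
    have ha : (a:ℝ)+1 ≠ 0 := by positivity
    have := fact_ne a
    field_simp
    ring
  | succ n ih =>
    intro a
    rw [pascal_sum n (fun k => 1/((k:ℝ)+a+1)^2)]
    have h1 := ih a
    have h2 := ih (a+1)
    have e2 : ∑ k ∈ range (n+1), (n.choose k : ℝ) * (-1)^k * (1/(((k+1:ℕ):ℝ)+a+1)^2)
        = ∑ k ∈ range (n+1), (n.choose k : ℝ) * (-1)^k * (1/((k:ℝ)+((a+1:ℕ):ℝ)+1)^2) := by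
      refine Finset.sum_congr rfl fun k _ => ?_
      push_cast; ring_nf
    rw [e2, h1, h2]
    have hn : (((n+(a+1)+1).factorial : ℕ) : ℝ) = (n+a+2) * (n+a+1).factorial := by
      rw [show n+(a+1)+1 = (n+a+1)+1 by ring, Nat.factorial_succ]; push_cast; ring
    have hn2 : (((n+1+a+1).factorial : ℕ) : ℝ) = (n+a+2) * (n+a+1).factorial := by
      rw [show n+1+a+1 = (n+a+1)+1 by ring, Nat.factorial_succ]; push_cast; ring
    have ha : (((a+1).factorial : ℕ) : ℝ) = (a+1) * a.factorial := by
      rw [Nat.factorial_succ]; push_cast; ring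
    have hnn : (((n+1).factorial : ℕ) : ℝ) = (n+1) * n.factorial := by
      rw [Nat.factorial_succ]; push_cast; ring
    have hH1 : harmonicNum (n+(a+1)+1) = harmonicNum (n+a+1) + 1/((n:ℝ)+a+2) := by
      rw [show n+(a+1)+1 = (n+a+1)+1 by ring, harmonicNum_succ]; push_cast; ring_nf
    have hH2 : harmonicNum (n+1+a+1) = harmonicNum (n+a+1) + 1/((n:ℝ)+a+2) := by
      rw [show n+1+a+1 = (n+a+1)+1 by ring, harmonicNum_succ]; push_cast; ring_nf
    have hHa : harmonicNum (a+1) = harmonicNum a + 1/((a:ℝ)+1) := by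
      rw [harmonicNum_succ]
    rw [hn, hn2, ha, hnn, hH1, hH2, hHa]
    have f1 := fact_ne (n+a+1)
    have f2 : ((n:ℝ)+(a:ℝ)+2) ≠ 0 := by positivity
    have f3 : ((a:ℝ)+1) ≠ 0 := by positivity
    field_simp
    ring

lemma int_pow_negMulLog (k : ℕ) (r : ℝ) (hr : 0 ≤ r) :
    ∫ u in (0:ℝ)..r, u^k * negMulLog u
      = r^(k+2)/((k:ℝ)+2)^2 + r^(k+1) * negMulLog r/((k:ℝ)+2) := by
  set F : ℝ → ℝ := fun u => u^(k+2)/((k:ℝ)+2)^2 + u^(k+1) * negMulLog u/((k:ℝ)+2) with hF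
  have hk : ((k:ℝ)+2) ≠ 0 := by positivity
  have hcont : ContinuousOn F (Set.Icc 0 r) := by
    apply Continuous.continuousOn
    fun_prop
  have hderiv : ∀ u ∈ Set.Ioo (0:ℝ) r, HasDerivAt F (u^k * negMulLog u) u := by
    intro u hu
    have hu0 : u ≠ 0 := ne_of_gt hu.1
    have hFeq : F = fun u => u^(k+2)/((k:ℝ)+2)^2 - u^(k+2) * Real.log u/((k:ℝ)+2) := by
      funext v
      simp only [hF, negMulLog, pow_succ]
      ring
    rw [hFeq]
    have h1 : HasDerivAt (fun v : ℝ => v^(k+2)) (((k:ℝ)+2)*u^(k+1)) u := by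
      have := hasDerivAt_pow (k+2) u
      convert this using 1
      · rfl
      push_cast; ring
    have hlog : HasDerivAt Real.log u⁻¹ u := Real.hasDerivAt_log hu0
    have h2 : HasDerivAt (fun v : ℝ => v^(k+2) * Real.log v)
        (((k:ℝ)+2)*u^(k+1) * Real.log u + u^(k+2) * u⁻¹) u := h1.mul hlog
    have h3 := (h1.div_const (((k:ℝ)+2)^2)).sub (h2.div_const ((k:ℝ)+2))
    convert h3 using 1
    · rfl
    · rfl
    · rfl
    have hp : u^(k+2) * u⁻¹ = u^(k+1) := by
      rw [pow_succ, mul_assoc, mul_inv_cancel₀ hu0, mul_one]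
    rw [hp, negMulLog]
    field_simp
    ring
  have hint : IntervalIntegrable (fun u => u^k * negMulLog u) volume 0 r := by
    apply Continuous.intervalIntegrable
    fun_prop
  have := intervalIntegral.integral_eq_sub_of_hasDeriv_right_of_le hr hcont
    (fun x hx => (hderiv x hx).hasDerivWithinAt) hint
  rw [this]
  simp [hF]

lemma expand_pow (n : ℕ) (r t : ℝ) :
    (r - t)^n = ∑ k ∈ range (n+1), (n.choose k : ℝ) * (-1)^k * r^(n-k) * t^k := by
  rw [show r - t = -t + r by ring, add_pow]
  refine Finset.sum_congr rfl fun k hk => ?_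
  rw [neg_pow]
  ring

lemma fact_ratio (n : ℕ) : (n.factorial : ℝ) / (n+2).factorial = 1/(((n:ℝ)+1)*((n:ℝ)+2)) := by
  have h1 : (((n+2).factorial : ℕ) : ℝ) = ((n:ℝ)+2) * ((n:ℝ)+1) * n.factorial := by
    rw [show n+2 = (n+1)+1 by ring, Nat.factorial_succ, Nat.factorial_succ]; push_cast; ring
  rw [h1]
  have := fact_ne n
  have h2 : ((n:ℝ)+1) ≠ 0 := by positivity
  have h3 : ((n:ℝ)+2) ≠ 0 := by positivity
  field_simp

lemma harmonicNum_one : harmonicNum 1 = 1 := by simp [harmonicNum]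

lemma E1 (n : ℕ) (r : ℝ) (hr : 0 ≤ r) :
    ∫ t in (0:ℝ)..r, negMulLog t * (r-t)^n
      = (harmonicNum (n+2) - 1) * r^(n+2)/(((n:ℝ)+1)*((n:ℝ)+2))
        + negMulLog r * r^(n+1)/(((n:ℝ)+1)*((n:ℝ)+2)) := by
  have hexp : ∀ t : ℝ, negMulLog t * (r-t)^n
      = ∑ k ∈ range (n+1), (n.choose k : ℝ) * (-1)^k * r^(n-k) * (t^k * negMulLog t) := by
    intro t
    rw [expand_pow, Finset.mul_sum]
    exact Finset.sum_congr rfl fun k _ => by ring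
  rw [intervalIntegral.integral_congr (g := fun t => ∑ k ∈ range (n+1),
      (n.choose k : ℝ) * (-1)^k * r^(n-k) * (t^k * negMulLog t)) (fun t _ => hexp t)]
  rw [intervalIntegral.integral_finset_sum]
  swap
  · intro k _
    apply Continuous.intervalIntegrable
    fun_prop
  have hterm : ∀ k ∈ range (n+1),
      (∫ t in (0:ℝ)..r, (n.choose k : ℝ) * (-1)^k * r^(n-k) * (t^k * negMulLog t))
      = (n.choose k : ℝ) * (-1)^k * (1/((k:ℝ)+2)^2) * r^(n+2)
        + (n.choose k : ℝ) * (-1)^k * (1/((k:ℝ)+2)) * (negMulLog r * r^(n+1)) := by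
    intro k hk
    rw [intervalIntegral.integral_const_mul, int_pow_negMulLog k r hr]
    have hkn : n - k + (k + 2) = n + 2 := by
      have := Finset.mem_range.mp hk; omega
    have hkn1 : n - k + (k + 1) = n + 1 := by
      have := Finset.mem_range.mp hk; omega
    have e1 : r^(n-k) * r^(k+2) = r^(n+2) := by rw [← pow_add, hkn]
    have e2 : r^(n-k) * r^(k+1) = r^(n+1) := by rw [← pow_add, hkn1]
    rw [mul_add]
    rw [show (n.choose k : ℝ) * (-1)^k * r^(n-k) * (r^(k+2)/((k:ℝ)+2)^2)
        = (n.choose k : ℝ) * (-1)^k * (1/((k:ℝ)+2)^2) * (r^(n-k) * r^(k+2)) by ring, e1]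
    rw [show (n.choose k : ℝ) * (-1)^k * r^(n-k) * (r^(k+1) * negMulLog r/((k:ℝ)+2))
        = (n.choose k : ℝ) * (-1)^k * (1/((k:ℝ)+2)) * (negMulLog r * (r^(n-k) * r^(k+1))) by ring,
      e2]
  rw [Finset.sum_congr rfl hterm, Finset.sum_add_distrib, ← Finset.sum_mul, ← Finset.sum_mul]
  have hA : ∑ k ∈ range (n+1), (n.choose k : ℝ) * (-1)^k * (1/((k:ℝ)+2))
      = 1/(((n:ℝ)+1)*((n:ℝ)+2)) := by
    have := sumA n 1
    simp only [Nat.cast_one, Nat.factorial_one, mul_one] at this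
    rw [show ∑ k ∈ range (n+1), (n.choose k : ℝ) * (-1)^k * (1/((k:ℝ)+2))
        = ∑ k ∈ range (n+1), (n.choose k : ℝ) * (-1)^k * (1/((k:ℝ)+1+1)) by
        refine Finset.sum_congr rfl fun k _ => by ring, this]
    rw [show n+1+1 = n+2 by ring]
    exact fact_ratio n
  have hB : ∑ k ∈ range (n+1), (n.choose k : ℝ) * (-1)^k * (1/((k:ℝ)+2)^2)
      = (harmonicNum (n+2) - 1)/(((n:ℝ)+1)*((n:ℝ)+2)) := by
    have := sumB n 1
    simp only [Nat.cast_one, Nat.factorial_one, mul_one] at this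
    rw [show ∑ k ∈ range (n+1), (n.choose k : ℝ) * (-1)^k * (1/((k:ℝ)+2)^2)
        = ∑ k ∈ range (n+1), (n.choose k : ℝ) * (-1)^k * (1/((k:ℝ)+1+1)^2) by
        refine Finset.sum_congr rfl fun k _ => by ring, this]
    rw [show n+1+1 = n+2 by ring, fact_ratio n, harmonicNum_one]
    ring
  rw [hA, hB]
  ring

lemma step_int (n : ℕ) (r : ℝ) (hr : 0 ≤ r) :
    ∫ t in (0:ℝ)..r, (negMulLog t * (r-t)^n / n.factorial
        + (harmonicNum (n+1) - 1) * (r-t)^(n+1) / n.factorial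
        + (r-t)^n * negMulLog (r-t) / n.factorial)
      = ((harmonicNum (n+2) - 1) * r^(n+2) + r^(n+1) * negMulLog r) / (n+1).factorial := by
  have c1 : Continuous (fun t : ℝ => negMulLog t * (r-t)^n / n.factorial) := by fun_prop
  have c2 : Continuous (fun t : ℝ => (harmonicNum (n+1) - 1) * (r-t)^(n+1) / n.factorial) := by
    fun_prop
  have c3 : Continuous (fun t : ℝ => (r-t)^n * negMulLog (r-t) / n.factorial) := by fun_prop
  rw [intervalIntegral.integral_add (by
      exact (c1.add c2).intervalIntegrable _ _) (c3.intervalIntegrable _ _),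
    intervalIntegral.integral_add (c1.intervalIntegrable _ _) (c2.intervalIntegrable _ _)]
  have e1 : ∫ t in (0:ℝ)..r, negMulLog t * (r-t)^n / n.factorial
      = ((harmonicNum (n+2) - 1) * r^(n+2)/(((n:ℝ)+1)*((n:ℝ)+2))
        + negMulLog r * r^(n+1)/(((n:ℝ)+1)*((n:ℝ)+2))) / n.factorial := by
    rw [intervalIntegral.integral_div, E1 n r hr]
  have e2 : ∫ t in (0:ℝ)..r, (harmonicNum (n+1) - 1) * (r-t)^(n+1) / n.factorial
      = (harmonicNum (n+1) - 1) * (r^(n+2)/((n:ℝ)+2)) / n.factorial := by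
    rw [intervalIntegral.integral_div, intervalIntegral.integral_const_mul]
    have := intervalIntegral.integral_comp_sub_left (a := (0:ℝ)) (b := r)
      (fun s => s^(n+1)) r
    simp only [sub_self, sub_zero] at this
    rw [this, integral_pow]
    norm_num
    rw [show n+1+1 = n+2 by ring]
    push_cast; ring
  have e3 : ∫ t in (0:ℝ)..r, (r-t)^n * negMulLog (r-t) / n.factorial
      = (r^(n+2)/((n:ℝ)+2)^2 + r^(n+1) * negMulLog r/((n:ℝ)+2)) / n.factorial := by
    rw [intervalIntegral.integral_div]
    have := intervalIntegral.integral_comp_sub_left (a := (0:ℝ)) (b := r)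
      (fun s => s^n * negMulLog s) r
    simp only [sub_self, sub_zero] at this
    rw [this, int_pow_negMulLog n r hr]
  rw [e1, e2, e3]
  have hfs : ((n+1).factorial : ℝ) = ((n:ℝ)+1) * n.factorial := by
    rw [Nat.factorial_succ]; push_cast; ring
  have hH : harmonicNum (n+2) = harmonicNum (n+1) + 1/((n:ℝ)+2) := by
    rw [show n+2 = (n+1)+1 by ring, harmonicNum_succ]; push_cast; ring
  rw [hfs, hH]
  have := fact_ne n
  have h2 : ((n:ℝ)+1) ≠ 0 := by positivity
  have h3 : ((n:ℝ)+2) ≠ 0 := by positivity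
  field_simp
  ring

def Sset (n : ℕ) (r : ℝ) : Set (Fin n → ℝ) := {x | (∀ j, 0 ≤ x j) ∧ ∑ j, x j ≤ r}

lemma isClosed_Sset (n : ℕ) (r : ℝ) : IsClosed (Sset n r) := by
  have h1 : IsClosed {x : Fin n → ℝ | ∀ j, 0 ≤ x j} := by
    have : {x : Fin n → ℝ | ∀ j, 0 ≤ x j} = ⋂ j, {x : Fin n → ℝ | 0 ≤ x j} := by
      ext x; simp
    rw [this]
    exact isClosed_iInter fun j => isClosed_le continuous_const (continuous_apply j)
  have h2 : IsClosed {x : Fin n → ℝ | ∑ j, x j ≤ r} :=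
    isClosed_le (by fun_prop) continuous_const
  exact (h1.inter h2)

lemma measurableSet_Sset (n : ℕ) (r : ℝ) : MeasurableSet (Sset n r) :=
  (isClosed_Sset n r).measurableSet

lemma isCompact_Sset (n : ℕ) (r : ℝ) : IsCompact (Sset n r) := by
  refine IsCompact.of_isClosed_subset (isCompact_Icc (a := fun _ : Fin n => (0:ℝ))
    (b := fun _ : Fin n => r)) (isClosed_Sset n r) ?_
  intro x hx
  obtain ⟨hx1, hx2⟩ := hx
  constructor
  · intro j; exact hx1 j
  · intro j
    calc x j ≤ ∑ i, x i := Finset.single_le_sum (fun i _ => hx1 i) (Finset.mem_univ j)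
    _ ≤ r := hx2

lemma integrableOn_Sset {n : ℕ} {r : ℝ} {f : (Fin n → ℝ) → ℝ} (hf : Continuous f) :
    IntegrableOn f (Sset n r) := by
  exact hf.continuousOn.integrableOn_compact (isCompact_Sset n r)

lemma integrable_indicator_Sset {n : ℕ} {r : ℝ} {f : (Fin n → ℝ) → ℝ} (hf : Continuous f) :
    Integrable (Set.indicator (Sset n r) f) := by
  rw [integrable_indicator_iff (measurableSet_Sset n r)]
  exact integrableOn_Sset hf

lemma fubini_Sset (n : ℕ) (r : ℝ) (φ : (Fin (n+1) → ℝ) → ℝ) (hφ : Continuous φ) :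
    ∫ x in Sset (n+1) r, φ x
      = ∫ t : ℝ, ∫ y : Fin n → ℝ,
          Set.indicator (Sset (n+1) r) φ (Fin.cons t y) := by
  rw [← integral_indicator (measurableSet_Sset (n+1) r)]
  set F := Set.indicator (Sset (n+1) r) φ with hF
  have hFint : Integrable F (volume : Measure (Fin (n+1) → ℝ)) :=
    integrable_indicator_Sset hφ
  have hmp := (measurePreserving_piFinSuccAbove (fun _ : Fin (n+1) => (volume : Measure ℝ)) 0).symm
  set e := MeasurableEquiv.piFinSuccAbove (fun _ : Fin (n+1) => ℝ) 0 with he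
  have h1 : ∫ x, F x ∂(volume : Measure (Fin (n+1) → ℝ))
      = ∫ p, F (e.symm p) ∂((volume : Measure ℝ).prod
          (Measure.pi fun _ : Fin n => (volume : Measure ℝ))) := by
    rw [volume_pi]
    exact (hmp.integral_comp' F).symm
  have hGint : Integrable (fun p => F (e.symm p)) ((volume : Measure ℝ).prod
      (Measure.pi fun _ : Fin n => (volume : Measure ℝ))) := by
    have := (hmp.integrable_comp (g := F) ?_).mpr ?_
    · exact this
    · rw [← volume_pi]; exact hFint.1
    · rw [← volume_pi]; exact hFint
  rw [h1, MeasureTheory.integral_prod _ hGint]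
  have h2 : ∀ t (y : Fin n → ℝ), F (e.symm (t, y)) = F (Fin.cons t y) := by
    intro t y
    congr 1
    simp [he, MeasurableEquiv.piFinSuccAbove_symm_apply, Fin.insertNthEquiv,
      Fin.insertNth_zero']
  simp_rw [h2]
  rw [← volume_pi]

lemma cons_mem_Sset {n : ℕ} {r t : ℝ} {y : Fin n → ℝ} :
    Fin.cons t y ∈ Sset (n+1) r ↔ (0 ≤ t ∧ (∀ j, 0 ≤ y j) ∧ ∑ j, y j ≤ r - t) := by
  unfold Sset
  rw [Set.mem_setOf_eq, Fin.forall_fin_succ, Fin.sum_cons]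
  simp only [Fin.cons_zero, Fin.cons_succ]
  constructor
  · rintro ⟨⟨h0, hs⟩, hsum⟩
    exact ⟨h0, hs, by linarith⟩
  · rintro ⟨h0, hs, hsum⟩
    exact ⟨⟨h0, hs⟩, by linarith⟩

lemma key (n : ℕ) : ∀ r : ℝ, 0 ≤ r →
    (volume (Sset n r)).toReal = r^n / n.factorial ∧
    ∫ x in Sset n r, ((∑ i, negMulLog (x i)) + negMulLog (r - ∑ i, x i))
      = ((harmonicNum (n+1) - 1) * r^(n+1) + r^n * negMulLog r) / n.factorial := by
  induction n with
  | zero =>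
    intro r hr
    have huniv : Sset 0 r = Set.univ := by
      ext x
      simp [Sset, hr]
    have hvol : (volume : Measure (Fin 0 → ℝ)) Set.univ = 1 := by
      rw [volume_pi, Measure.pi_univ]
      simp
    constructor
    · rw [huniv, hvol]; simp
    · rw [huniv, Measure.restrict_univ]
      rw [MeasureTheory.integral_unique]
      rw [measureReal_def, hvol]
      simp [harmonicNum_one]
  | succ n ih =>
    intro r hr
    have hfac : ((n+1).factorial : ℝ) = ((n:ℝ)+1) * n.factorial := by
      rw [Nat.factorial_succ]; push_cast; ring
    have hfne := fact_ne n
    have hn1 : ((n:ℝ)+1) ≠ 0 := by positivity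
    -- Part A : volume
    have hvol : (volume (Sset (n+1) r)).toReal = r^(n+1) / (n+1).factorial := by
      have h0 : ∫ x in Sset (n+1) r, (1:ℝ) = (volume (Sset (n+1) r)).toReal := by
        rw [setIntegral_const]; simp; rfl
      rw [← h0, fubini_Sset n r _ continuous_const]
      have hinner : ∀ t : ℝ, (∫ y : Fin n → ℝ,
          Set.indicator (Sset (n+1) r) (fun _ => (1:ℝ)) (Fin.cons t y))
          = Set.indicator (Set.Icc 0 r) (fun t => (r-t)^n / n.factorial) t := by
        intro t
        by_cases ht : t ∈ Set.Icc (0:ℝ) r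
        · have hind : ∀ y : Fin n → ℝ,
              Set.indicator (Sset (n+1) r) (fun _ => (1:ℝ)) (Fin.cons t y)
              = Set.indicator (Sset n (r-t)) (fun _ => (1:ℝ)) y := by
            intro y
            by_cases hy : y ∈ Sset n (r-t)
            · rw [Set.indicator_of_mem hy,
                Set.indicator_of_mem (cons_mem_Sset.mpr ⟨ht.1, hy.1, hy.2⟩)]
            · rw [Set.indicator_of_notMem hy, Set.indicator_of_notMem]
              intro hmem
              exact hy ⟨(cons_mem_Sset.mp hmem).2.1, (cons_mem_Sset.mp hmem).2.2⟩
          simp_rw [hind]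
          rw [MeasureTheory.integral_indicator (measurableSet_Sset n (r-t)),
            setIntegral_const, measureReal_def, (ih (r-t) (by linarith [ht.2])).1,
            Set.indicator_of_mem ht]
          simp
        · have hind : ∀ y : Fin n → ℝ,
              Set.indicator (Sset (n+1) r) (fun _ => (1:ℝ)) (Fin.cons t y) = 0 := by
            intro y
            rw [Set.indicator_of_notMem]
            intro hmem
            obtain ⟨h0, hy, hsum⟩ := cons_mem_Sset.mp hmem
            have : (0:ℝ) ≤ ∑ j, y j := Finset.sum_nonneg fun j _ => hy j
            exact ht ⟨h0, by linarith⟩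
          simp_rw [hind]
          rw [Set.indicator_of_notMem ht]
          simp
      simp_rw [hinner]
      rw [MeasureTheory.integral_indicator measurableSet_Icc,
        integral_Icc_eq_integral_Ioc, ← intervalIntegral.integral_of_le hr,
        intervalIntegral.integral_div]
      have := intervalIntegral.integral_comp_sub_left (a := (0:ℝ)) (b := r)
        (fun s => s^n) r
      simp only [sub_self, sub_zero] at this
      rw [this, integral_pow]
      rw [hfac]
      field_simp
      simp
    refine ⟨hvol, ?_⟩
    -- Part B : entropy integral
    have hcontf : Continuous (fun x : Fin (n+1) → ℝ =>
        (∑ i, negMulLog (x i)) + negMulLog (r - ∑ i, x i)) := by fun_prop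
    rw [fubini_Sset n r _ hcontf]
    have hinner : ∀ t : ℝ, (∫ y : Fin n → ℝ,
        Set.indicator (Sset (n+1) r) (fun x => (∑ i, negMulLog (x i))
          + negMulLog (r - ∑ i, x i)) (Fin.cons t y))
        = Set.indicator (Set.Icc 0 r) (fun t => negMulLog t * (r-t)^n / n.factorial
            + (harmonicNum (n+1) - 1) * (r-t)^(n+1) / n.factorial
            + (r-t)^n * negMulLog (r-t) / n.factorial) t := by
      intro t
      by_cases ht : t ∈ Set.Icc (0:ℝ) r
      · have hval : ∀ y : Fin n → ℝ, ((∑ i, negMulLog ((Fin.cons t y : Fin (n+1) → ℝ) i))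
            + negMulLog (r - ∑ i, (Fin.cons t y : Fin (n+1) → ℝ) i))
            = negMulLog t + ((∑ i, negMulLog (y i)) + negMulLog ((r-t) - ∑ i, y i)) := by
          intro y
          rw [Fin.sum_univ_succ (f := fun i => negMulLog ((Fin.cons t y : Fin (n+1) → ℝ) i)),
            Fin.sum_cons]
          simp only [Fin.cons_zero, Fin.cons_succ]
          ring_nf
        have hind : ∀ y : Fin n → ℝ,
            Set.indicator (Sset (n+1) r) (fun x => (∑ i, negMulLog (x i))
              + negMulLog (r - ∑ i, x i)) (Fin.cons t y)
            = Set.indicator (Sset n (r-t)) (fun y => negMulLog t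
              + ((∑ i, negMulLog (y i)) + negMulLog ((r-t) - ∑ i, y i))) y := by
          intro y
          by_cases hy : y ∈ Sset n (r-t)
          · rw [Set.indicator_of_mem hy,
              Set.indicator_of_mem (cons_mem_Sset.mpr ⟨ht.1, hy.1, hy.2⟩), hval]
          · rw [Set.indicator_of_notMem hy, Set.indicator_of_notMem]
            intro hmem
            exact hy ⟨(cons_mem_Sset.mp hmem).2.1, (cons_mem_Sset.mp hmem).2.2⟩
        simp_rw [hind]
        rw [MeasureTheory.integral_indicator (measurableSet_Sset n (r-t))]
        have hcont2 : Continuous (fun y : Fin n → ℝ =>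
            (∑ i, negMulLog (y i)) + negMulLog ((r-t) - ∑ i, y i)) := by fun_prop
        rw [MeasureTheory.integral_add (integrableOn_Sset continuous_const)
          (integrableOn_Sset hcont2), setIntegral_const,
          (ih (r-t) (by linarith [ht.2])).2, measureReal_def, (ih (r-t) (by linarith [ht.2])).1,
          Set.indicator_of_mem ht]
        simp only [smul_eq_mul]
        field_simp
        ring
      · have hind : ∀ y : Fin n → ℝ,
            Set.indicator (Sset (n+1) r) (fun x => (∑ i, negMulLog (x i))
              + negMulLog (r - ∑ i, x i)) (Fin.cons t y) = 0 := by
          intro y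
          rw [Set.indicator_of_notMem]
          intro hmem
          obtain ⟨h0, hy, hsum⟩ := cons_mem_Sset.mp hmem
          have : (0:ℝ) ≤ ∑ j, y j := Finset.sum_nonneg fun j _ => hy j
          exact ht ⟨h0, by linarith⟩
        simp_rw [hind]
        rw [Set.indicator_of_notMem ht]
        simp
    simp_rw [hinner]
    rw [MeasureTheory.integral_indicator measurableSet_Icc,
      integral_Icc_eq_integral_Ioc, ← intervalIntegral.integral_of_le hr,
      step_int n r hr]


end AuxEntropy

/-- The average Shannon entropy over the uniform measure on the probability
simplex equals `H_N - 1`. -/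
theorem avg_entropy_simplex (N : ℕ) (hN : 1 ≤ N) :
    simplexIntegral N (fun lam => shannonEntropy lam) = harmonicNum N - 1 := by

  obtain ⟨n, rfl⟩ : ∃ n, N = n + 1 := ⟨N-1, (Nat.succ_pred_eq_of_pos hN).symm⟩
  have h1 : ∀ x : Fin n → ℝ, shannonEntropy (simplexMap (n+1) x)
      = (∑ i, negMulLog (x i)) + negMulLog (1 - ∑ i, x i) := by
    intro x
    unfold shannonEntropy
    rw [Fin.sum_univ_castSucc]
    congr 1
    · refine Finset.sum_congr rfl fun i _ => ?_
      congr 1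
      show simplexMap (n+1) x i.castSucc = x i
      unfold simplexMap
      rw [dif_pos (by simpa using i.isLt)]
      exact congrArg x (Fin.ext (by simp))
    · congr 1
      show simplexMap (n+1) x (Fin.last n) = 1 - ∑ i, x i
      unfold simplexMap
      rw [dif_neg (by simp)]
      rfl
  have hset : solidSimplex (n+1) = Sset n 1 := rfl
  unfold simplexIntegral
  rw [hset]
  simp_rw [h1]
  have hgoal : (∫ (x : Fin (n+1-1) → ℝ) in Sset n 1,
      ((∑ i : Fin n, negMulLog (x i)) + negMulLog (1 - ∑ i : Fin n, x i)))
      = (harmonicNum (n+1) - 1)/n.factorial := by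
    have := (key n 1 zero_le_one).2
    simp only [one_pow, negMulLog_one, mul_one, mul_zero, add_zero] at this
    exact this
  rw [hgoal]
  have := fact_ne n
  have hfe : (((n+1-1).factorial : ℕ) : ℝ) = (n.factorial : ℝ) := rfl
  rw [hfe]
  field_simp
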